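/- Let F = {f_i}_{i∈I} and E = {e_j}_{j∈G} be sequences in H with associated map a : I → G such that D⁺(I,a) < ∞ (equivalently, sup_{n∈G} |a⁻¹(n)| < ∞ after noting finiteness of fibers follows from finite upper density). If (F,a,E) is ℓᵖ-localized for some 1 ≤ p < ∞, then (F,a,E) has both ℓᵖ-column decay and ℓᵖ-row decay. -/

import Mathlib

open scoped InnerProductSpace

/-- Tail smallness for a summable nonnegative function on a normed group. -/
private lemma tail_small {G : Type*} [NormedAddCommGroup G]
    (h : G → ℝ) (h0 : ∀ g, 0 ≤ h g) (hs : Summable h) {ε : ℝ} (hε : 0 < ε) :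
    ∃ N : ℕ, ∑' g : {g : G // ¬ ‖g‖ ≤ (N : ℝ) / 2}, h g < ε := by
  classical
  have := (tendsto_order.1 (tendsto_tsum_compl_atTop_zero h)).2 ε hε
  obtain ⟨s, hsum⟩ := this.exists
  set C : ℝ := ∑ g ∈ s, ‖g‖ with hC
  obtain ⟨N, hN⟩ := exists_nat_ge (2 * C)
  refine ⟨N, lt_of_le_of_lt ?_ hsum⟩
  have hCle : ∀ g ∈ s, ‖g‖ ≤ C := fun g hg =>
    Finset.single_le_sum (fun i _ => norm_nonneg i) hg
  have hincl : ∀ g : G, ¬ ‖g‖ ≤ (N : ℝ) / 2 → g ∉ s := by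
    intro g hg hgs
    exact hg (le_trans (hCle g hgs) (by linarith))
  refine (hs.subtype _).tsum_le_tsum_of_inj (fun x => ⟨x.1, hincl x.1 x.2⟩)
    (fun x y hxy => by
      simp only [Subtype.mk.injEq] at hxy
      exact Subtype.ext hxy)
    (fun c _ => h0 c.1) (fun x => le_refl _) (hs.subtype _)

theorem stmt_9
    {H : Type*} [NormedAddCommGroup H] [InnerProductSpace ℂ H]
    {I G : Type*} [Countable I] [Countable G] [NormedAddCommGroup G]
    (f : I → H) (e : G → H) (a : I → G) (p : ℝ) (hp : 1 ≤ p)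
    -- finite upper density: uniformly finite fibers
    (K : ℕ) (hK : ∀ n : G, (a ⁻¹' {n}).Finite ∧ Nat.card (a ⁻¹' {n}) ≤ K)
    -- ℓᵖ-localization
    (r : G → ℝ) (hr0 : ∀ g : G, 0 ≤ r g) (hr : Summable fun g => r g ^ p)
    (hloc : ∀ (i : I) (j : G), ‖⟪f i, e j⟫_ℂ‖ ≤ r (a i - j)) :
    -- ℓᵖ-column decay
    (∀ ε > (0 : ℝ), ∃ N : ℕ, ∀ j : G,
      ∑' i : {i : I // ¬ ‖a i - j‖ ≤ (N : ℝ) / 2}, ‖⟪f i.1, e j⟫_ℂ‖ ^ p < ε) ∧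
    -- ℓᵖ-row decay
    (∀ ε > (0 : ℝ), ∃ N : ℕ, ∀ i : I,
      ∑' j : {j : G // ¬ ‖j - a i‖ ≤ (N : ℝ) / 2}, ‖⟪f i, e j.1⟫_ℂ‖ ^ p < ε) := by
  classical
  have hp0 : (0 : ℝ) ≤ p := le_trans zero_le_one hp
  set h : G → ℝ := fun g => r g ^ p with hh
  have h0 : ∀ g, 0 ≤ h g := fun g => Real.rpow_nonneg (hr0 g) p
  have hterm : ∀ (i : I) (j : G), ‖⟪f i, e j⟫_ℂ‖ ^ p ≤ h (a i - j) := fun i j =>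
    Real.rpow_le_rpow (norm_nonneg _) (hloc i j) hp0
  constructor
  · -- column decay
    intro ε hε
    have hε' : 0 < ε / (K + 1) := by positivity
    obtain ⟨N, hN⟩ := tail_small h h0 hr hε'
    set T : ℝ := ∑' g : {g : G // ¬ ‖g‖ ≤ (N : ℝ) / 2}, h g.1 with hT
    have hT0 : 0 ≤ T := tsum_nonneg fun g => h0 g.1
    refine ⟨N, fun j => ?_⟩
    have hbound : ∑' i : {i : I // ¬ ‖a i - j‖ ≤ (N : ℝ) / 2}, ‖⟪f i.1, e j⟫_ℂ‖ ^ p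
        ≤ (K : ℝ) * T := by
      refine tsum_le_of_sum_le' (by positivity) fun s => ?_
      set φ : {i : I // ¬ ‖a i - j‖ ≤ (N : ℝ) / 2} → G := fun i => a i.1 - j with hφ
      have step1 : ∑ i ∈ s, ‖⟪f i.1, e j⟫_ℂ‖ ^ p ≤ ∑ i ∈ s, h (φ i) :=
        Finset.sum_le_sum fun i _ => hterm i.1 j
      have step2 : ∑ i ∈ s, h (φ i)
          = ∑ g ∈ s.image φ, (s.filter fun i => φ i = g).card • h g :=
        Finset.sum_comp h φ
      have hcard : ∀ g : G, (s.filter fun i => φ i = g).card ≤ K := by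
        intro g
        have hfin := (hK (g + j)).1
        have : (s.filter fun i => φ i = g).card ≤ hfin.toFinset.card := by
          refine Finset.card_le_card_of_injOn (fun i => i.1) ?_ ?_
          · intro i hi
            simp only [Finset.mem_coe, Finset.mem_filter] at hi
            have hx : a i.1 = g + j := by
              have := hi.2
              simp only [hφ] at this
              rw [sub_eq_iff_eq_add] at this
              exact this
            rw [Finset.mem_coe, Set.Finite.mem_toFinset]
            simpa using hx
          · intro x _ y _ hxy
            exact Subtype.ext hxy
        calc (s.filter fun i => φ i = g).card ≤ hfin.toFinset.card := this
          _ = Nat.card (a ⁻¹' {g + j}) := by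
              rw [← Set.ncard_eq_toFinset_card _ hfin, Nat.card_coe_set_eq]
          _ ≤ K := (hK (g + j)).2
      have step3 : ∑ g ∈ s.image φ, (s.filter fun i => φ i = g).card • h g
          ≤ ∑ g ∈ s.image φ, (K : ℝ) * h g := by
        refine Finset.sum_le_sum fun g _ => ?_
        rw [nsmul_eq_mul]
        exact mul_le_mul_of_nonneg_right (by exact_mod_cast hcard g) (h0 g)
      have himg : ∀ g ∈ s.image φ, ¬ ‖g‖ ≤ (N : ℝ) / 2 := by
        intro g hg
        obtain ⟨i, _, rfl⟩ := Finset.mem_image.1 hg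
        exact i.2
      have step4 : ∑ g ∈ s.image φ, h g ≤ T := by
        set t := s.image φ with ht
        set emb : {x // x ∈ t} → {g : G // ¬ ‖g‖ ≤ (N : ℝ) / 2} :=
          fun x => ⟨x.1, himg x.1 x.2⟩ with hemb
        have hembinj : Function.Injective emb := by
          intro x y hxy
          simp only [emb, Subtype.mk.injEq] at hxy
          exact Subtype.ext hxy
        have : ∑ g ∈ t, h g = ∑ x ∈ t.attach.image emb, h x.1 := by
          rw [Finset.sum_image (fun x _ y _ hxy => hembinj hxy)]
          exact (Finset.sum_attach t h).symm
        rw [this]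
        exact (hr.subtype _).sum_le_tsum _ (fun g _ => h0 g.1)
      calc ∑ i ∈ s, ‖⟪f i.1, e j⟫_ℂ‖ ^ p
          ≤ ∑ g ∈ s.image φ, (s.filter fun i => φ i = g).card • h g := by
            rw [← step2]; exact step1
        _ ≤ ∑ g ∈ s.image φ, (K : ℝ) * h g := step3
        _ = (K : ℝ) * ∑ g ∈ s.image φ, h g := by rw [Finset.mul_sum]
        _ ≤ (K : ℝ) * T := mul_le_mul_of_nonneg_left step4 (Nat.cast_nonneg K)
    calc ∑' i : {i : I // ¬ ‖a i - j‖ ≤ (N : ℝ) / 2}, ‖⟪f i.1, e j⟫_ℂ‖ ^ p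
        ≤ (K : ℝ) * T := hbound
      _ ≤ (K : ℝ) * (ε / (K + 1)) := mul_le_mul_of_nonneg_left hN.le (Nat.cast_nonneg K)
      _ < ε := by
          rw [mul_div_assoc']
          rw [div_lt_iff₀ (by positivity)]
          nlinarith [Nat.cast_nonneg (α := ℝ) K]
  · -- row decay
    intro ε hε
    obtain ⟨N, hN⟩ := tail_small h h0 hr hε
    refine ⟨N, fun i => ?_⟩
    set ψ : {j : G // ¬ ‖j - a i‖ ≤ (N : ℝ) / 2} → {g : G // ¬ ‖g‖ ≤ (N : ℝ) / 2} :=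
      fun j => ⟨a i - j.1, by rw [norm_sub_rev]; exact j.2⟩ with hψ
    have hψinj : Function.Injective ψ := by
      intro x y hxy
      have hv : a i - x.1 = a i - y.1 := Subtype.ext_iff.1 hxy
      exact Subtype.ext (sub_right_injective hv)
    have hsumψ : Summable fun j : {j : G // ¬ ‖j - a i‖ ≤ (N : ℝ) / 2} => h (ψ j).1 :=
      (hr.subtype _).comp_injective hψinj
    have hsumf : Summable fun j : {j : G // ¬ ‖j - a i‖ ≤ (N : ℝ) / 2} =>
        ‖⟪f i, e j.1⟫_ℂ‖ ^ p :=
      hsumψ.of_nonneg_of_le (fun j => Real.rpow_nonneg (norm_nonneg _) p)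
        (fun j => hterm i j.1)
    have : ∑' j : {j : G // ¬ ‖j - a i‖ ≤ (N : ℝ) / 2}, ‖⟪f i, e j.1⟫_ℂ‖ ^ p
        ≤ ∑' g : {g : G // ¬ ‖g‖ ≤ (N : ℝ) / 2}, h g.1 :=
      hsumf.tsum_le_tsum_of_inj ψ hψinj (fun c _ => h0 c.1) (fun j => hterm i j.1)
        (hr.subtype _)
    exact lt_of_le_of_lt this hN
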